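/- Let N be a prime with N > 3 and N ≡ 2 (mod 3). Then the number of orbits of the action of (ℤ/Nℤ)ˣ on the 3-element subsets of ℤ/Nℤ equals (N² − 2N + 3)/6. -/

import Mathlib

open scoped BigOperators
open MulAction

/-- The orbit equivalence relation, on `d`-element subsets of `ℤ/Nℤ`, induced by the
multiplication action of `(ℤ/Nℤ)ˣ`: `u·S = {u·s : s ∈ S}`. -/
def subsetOrbitRel (N d : ℕ) (S S' : {s : Finset (ZMod N) // s.card = d}) : Prop :=
  ∃ u : (ZMod N)ˣ, Finset.image (fun x => (u : ZMod N) * x) S.1 = S'.1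

instance subsetMulAction (N d : ℕ) : MulAction (ZMod N)ˣ {s : Finset (ZMod N) // s.card = d} where
  smul u S := ⟨Finset.image (fun x => (u : ZMod N) * x) S.1, by
    rw [Finset.card_image_of_injective _ (u.isUnit.mul_right_injective)]
    exact S.2⟩
  one_smul S := Subtype.ext (by show Finset.image _ _ = _; simp)
  mul_smul u v S := Subtype.ext (by
    show Finset.image _ _ = Finset.image _ (Finset.image _ _)
    rw [Finset.image_image]; simp [Function.comp, mul_assoc])

lemma smul_val {N d : ℕ} (u : (ZMod N)ˣ) (S : {s : Finset (ZMod N) // s.card = d}) :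
    (u • S).1 = Finset.image (fun x => (u : ZMod N) * x) S.1 := rfl

section aux

variable {N : ℕ} [Fact N.Prime]

lemma mem_of_fix {u : ZMod N} {S : Finset (ZMod N)}
    (hfix : S.image (fun x => u * x) = S) {x : ZMod N} (hx : x ∈ S) : u * x ∈ S :=
  hfix ▸ Finset.mem_image_of_mem _ hx

/-- No 3-subset is fixed by a unit other than ±1. -/
lemma no_fix (hN3 : 3 < N) (hmod : N % 3 = 2) (u : (ZMod N)ˣ) (hu1 : u ≠ 1) (hun : u ≠ -1)
    (S : Finset (ZMod N)) (h3 : S.card = 3)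
    (hfix : S.image (fun x => (u : ZMod N) * x) = S) : False := by
  have hN := (Fact.out : N.Prime)
  haveI : NeZero N := ⟨hN.pos.ne'⟩
  have hu1' : (u : ZMod N) ≠ 1 := fun h => hu1 (Units.ext (by simpa using h))
  have hun' : (u : ZMod N) ≠ -1 := fun h => hun (Units.ext (by simpa using h))
  have hu0 : (u : ZMod N) ≠ 0 := u.ne_zero
  have key : ∀ x : ZMod N, x ≠ 0 → (u : ZMod N) * x ≠ x := by
    intro x hx0 h
    have hz : ((u : ZMod N) - 1) * x = 0 := by linear_combination h
    rcases mul_eq_zero.1 hz with h' | h'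
    · exact hu1' (by linear_combination h')
    · exact hx0 h'
  by_cases h0 : (0 : ZMod N) ∈ S
  · -- S = {0, b, c}, u swaps b and c, so u² = 1, u = ±1
    have h2 : (S.erase 0).card = 2 := by rw [Finset.card_erase_of_mem h0, h3]
    obtain ⟨b, c, hbc, he⟩ := Finset.card_eq_two.1 h2
    have hb : b ∈ S.erase 0 := he ▸ Finset.mem_insert_self _ _
    have hc : c ∈ S.erase 0 := he ▸ Finset.mem_insert_of_mem (Finset.mem_singleton_self _)
    have hb0 : b ≠ 0 := (Finset.mem_erase.1 hb).1
    have hc0 : c ≠ 0 := (Finset.mem_erase.1 hc).1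
    have hub : (u : ZMod N) * b ∈ S.erase 0 :=
      Finset.mem_erase.2 ⟨mul_ne_zero hu0 hb0, mem_of_fix hfix (Finset.mem_erase.1 hb).2⟩
    rw [he, Finset.mem_insert, Finset.mem_singleton] at hub
    have hubc : (u : ZMod N) * b = c := hub.resolve_left (key b hb0)
    have huc : (u : ZMod N) * c ∈ S.erase 0 :=
      Finset.mem_erase.2 ⟨mul_ne_zero hu0 hc0, mem_of_fix hfix (Finset.mem_erase.1 hc).2⟩
    rw [he, Finset.mem_insert, Finset.mem_singleton] at huc
    have hucb : (u : ZMod N) * c = b := by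
      rcases huc with h' | h'
      · exact h'
      · exact (key c hc0 h').elim
    have hsq : ((u : ZMod N) * u - 1) * b = 0 := by
      have h9 : (u : ZMod N) * ((u : ZMod N) * b) = b := by rw [hubc, hucb]
      linear_combination h9
    rcases mul_eq_zero.1 hsq with h' | h'
    · have hz : ((u : ZMod N) - 1) * ((u : ZMod N) + 1) = 0 := by linear_combination h'
      rcases mul_eq_zero.1 hz with h'' | h''
      · exact hu1' (by linear_combination h'')
      · exact hun' (by linear_combination h'')
    · exact hb0 h'
  · -- 0 ∉ S : u acts as a 3-cycle, so u³ = 1, contradicting N ≡ 2 mod 3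
    obtain ⟨a, b, c, hab, hac, hbc, hS⟩ := Finset.card_eq_three.1 h3
    have haS : a ∈ S := hS ▸ Finset.mem_insert_self _ _
    have hbS : b ∈ S := hS ▸ Finset.mem_insert_of_mem (Finset.mem_insert_self _ _)
    have hcS : c ∈ S := hS ▸ Finset.mem_insert_of_mem
      (Finset.mem_insert_of_mem (Finset.mem_singleton_self _))
    have ha0 : a ≠ 0 := fun h => h0 (h ▸ haS)
    have hb0 : b ≠ 0 := fun h => h0 (h ▸ hbS)
    have hc0 : c ≠ 0 := fun h => h0 (h ▸ hcS)
    have hmem : ∀ x ∈ S, (u : ZMod N) * x = a ∨ (u : ZMod N) * x = b ∨ (u : ZMod N) * x = c := by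
      intro x hx
      have := mem_of_fix hfix hx
      rw [hS] at this
      simpa using this
    have hcube : (u : ZMod N) ^ 3 = 1 := by
      have hinj : ∀ x y : ZMod N, (u : ZMod N) * x = (u : ZMod N) * y → x = y :=
        fun x y h => mul_left_cancel₀ hu0 h
      have ha' := (hmem a haS).resolve_left (key a ha0)
      have hb' := hmem b hbS
      have hc' := hmem c hcS
      rcases ha' with hua | hua
      · -- u*a = b
        rcases hb' with hub | hub | hub
        · rcases hc' with huc | huc | huc
          · exact (hbc (hinj _ _ (hub.trans huc.symm))).elim
          · exact (hac (hinj _ _ (hua.trans huc.symm))).elim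
          · exact (key c hc0 huc).elim
        · exact (key b hb0 hub).elim
        · -- u*b = c, then u*c = a
          have huc : (u : ZMod N) * c = a := by
            rcases hc' with h' | h' | h'
            · exact h'
            · exact (hac (hinj _ _ (hua.trans h'.symm))).elim
            · exact (key c hc0 h').elim
          have key3 : ((u : ZMod N) ^ 3 - 1) * a = 0 := by
            have h9 : (u : ZMod N) * ((u : ZMod N) * ((u : ZMod N) * a)) = a := by
              rw [hua, hub, huc]
            linear_combination h9
          rcases mul_eq_zero.1 key3 with h' | h'
          · linear_combination h'
          · exact (ha0 h').elim
      · -- u*a = c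
        rcases hc' with huc | huc | huc
        · rcases hb' with hub | hub | hub
          · exact (hbc (hinj _ _ (hub.trans huc.symm))).elim
          · exact (key b hb0 hub).elim
          · exact (hab (hinj _ _ (hua.trans hub.symm))).elim
        · -- u*c = b, then u*b = a
          have hub : (u : ZMod N) * b = a := by
            rcases hb' with h' | h' | h'
            · exact h'
            · exact (key b hb0 h').elim
            · exact (hab (hinj _ _ (hua.trans h'.symm))).elim
          have key3 : ((u : ZMod N) ^ 3 - 1) * a = 0 := by
            have h9 : (u : ZMod N) * ((u : ZMod N) * ((u : ZMod N) * a)) = a := by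
              rw [hua, huc, hub]
            linear_combination h9
          rcases mul_eq_zero.1 key3 with h' | h'
          · linear_combination h'
          · exact (ha0 h').elim
        · exact (key c hc0 huc).elim
    have hcubeu : u ^ 3 = 1 := Units.ext (by push_cast; exact hcube)
    haveI : Fact (Nat.Prime 3) := ⟨by norm_num⟩
    have hord : orderOf u = 3 := orderOf_eq_prime hcubeu hu1
    have hdvd : 3 ∣ N - 1 := by
      have h1 : orderOf u ∣ Fintype.card (ZMod N)ˣ := orderOf_dvd_card
      rwa [ZMod.card_units_eq_totient, Nat.totient_prime hN, hord] at h1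
    omega

lemma myTwoNeZero (hN3 : 3 < N) : (2 : ZMod N) ≠ 0 := by
  intro h
  have h2 : (N : ℕ) ∣ 2 := by
    have := (ZMod.natCast_eq_zero_iff 2 N).1 (by exact_mod_cast h)
    exact this
  have := Nat.le_of_dvd (by norm_num) h2
  omega

lemma myNegNeSelf (hN3 : 3 < N) {x : ZMod N} (hx : x ≠ 0) : -x ≠ x := by
  intro h
  have h2 : (2 : ZMod N) * x = 0 := by linear_combination -h
  rcases mul_eq_zero.1 h2 with h' | h'
  · exact myTwoNeZero hN3 h'
  · exact hx h'

/-- Classification of 3-subsets fixed by -1. -/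
lemma neg_fix_iff (hN3 : 3 < N) (S : Finset (ZMod N)) :
    (S.card = 3 ∧ S.image (fun x : ZMod N => -1 * x) = S) ↔
      ∃ x : ZMod N, x ≠ 0 ∧ S = {0, x, -x} := by
  constructor
  · rintro ⟨h3, hfix⟩
    have negmem : ∀ x ∈ S, -x ∈ S := by
      intro x hx
      have := mem_of_fix hfix hx
      simpa using this
    have h0 : (0 : ZMod N) ∈ S := by
      by_contra h0
      obtain ⟨a, b, c, hab, hac, hbc, hS⟩ := Finset.card_eq_three.1 h3
      have haS : a ∈ S := hS ▸ Finset.mem_insert_self _ _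
      have hbS : b ∈ S := hS ▸ Finset.mem_insert_of_mem (Finset.mem_insert_self _ _)
      have hcS : c ∈ S := hS ▸ Finset.mem_insert_of_mem
        (Finset.mem_insert_of_mem (Finset.mem_singleton_self _))
      have ha0 : a ≠ 0 := fun h => h0 (h ▸ haS)
      have hb0 : b ≠ 0 := fun h => h0 (h ▸ hbS)
      have hc0 : c ≠ 0 := fun h => h0 (h ▸ hcS)
      have hmem : ∀ x ∈ S, -x = a ∨ -x = b ∨ -x = c := by
        intro x hx
        have := negmem x hx
        rw [hS] at this; simpa using this
      have hna := (hmem a haS).resolve_left (myNegNeSelf hN3 ha0)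
      rcases hna with hna | hna
      · -- -a = b
        rcases hmem c hcS with h' | h' | h'
        · exact hbc (by linear_combination h' - hna)
        · exact hac (by linear_combination h' - hna)
        · exact myNegNeSelf hN3 hc0 h'
      · -- -a = c
        rcases hmem b hbS with h' | h' | h'
        · exact hbc (by linear_combination hna - h')
        · exact myNegNeSelf hN3 hb0 h'
        · exact hab (by linear_combination h' - hna)
    have h2 : (S.erase 0).card = 2 := by rw [Finset.card_erase_of_mem h0, h3]
    obtain ⟨b, c, hbc, he⟩ := Finset.card_eq_two.1 h2
    have hb : b ∈ S.erase 0 := he ▸ Finset.mem_insert_self _ _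
    have hb0 : b ≠ 0 := (Finset.mem_erase.1 hb).1
    have hnb : -b ∈ S.erase 0 := Finset.mem_erase.2
      ⟨neg_ne_zero.2 hb0, negmem b (Finset.mem_erase.1 hb).2⟩
    rw [he, Finset.mem_insert, Finset.mem_singleton] at hnb
    have hnbc : -b = c := hnb.resolve_left (myNegNeSelf hN3 hb0)
    refine ⟨b, hb0, ?_⟩
    rw [← Finset.insert_erase h0, he, hnbc]
  · rintro ⟨x, hx0, rfl⟩
    have hxn : -x ≠ x := myNegNeSelf hN3 hx0
    have h0x : (0 : ZMod N) ≠ x := fun h => hx0 h.symm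
    have h0nx : (0 : ZMod N) ≠ -x := fun h => hx0 (neg_eq_zero.1 h.symm)
    constructor
    · rw [Finset.card_insert_of_notMem (by simp [h0x, h0nx]),
        Finset.card_insert_of_notMem (by simpa using fun h => hxn h.symm),
        Finset.card_singleton]
    · rw [Finset.image_insert, Finset.image_insert, Finset.image_singleton]
      simp only [mul_zero, neg_one_mul, neg_zero, neg_neg]
      rw [Finset.pair_comm]

end aux
lemma mychoose2 (n : ℕ) : (n + 2).choose 2 * 2 = (n + 2) * (n + 1) := by
  induction n with
  | zero => rfl
  | succ n ih =>
    have h : (n + 1 + 2) = (n + 2) + 1 := by omega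
    rw [h, Nat.choose_succ_succ, Nat.choose_one_right, add_mul, ih]
    ring

lemma mychoose3 (n : ℕ) : (n + 3).choose 3 * 6 = (n + 3) * (n + 2) * (n + 1) := by
  induction n with
  | zero => rfl
  | succ n ih =>
    have h : (n + 1 + 3) = (n + 3) + 1 := by omega
    rw [h, Nat.choose_succ_succ]
    have h2 := mychoose2 (n + 1)
    calc ((n + 3).choose 2 + (n + 3).choose 3) * 6
        = (n + 3).choose 2 * 2 * 3 + (n + 3).choose 3 * 6 := by ring
      _ = (n + 1 + 2) * (n + 1 + 1) * 3 + (n + 3) * (n + 2) * (n + 1) := by rw [h2, ih]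
      _ = (n + 1 + 3) * (n + 1 + 2) * (n + 1 + 1) := by ring


noncomputable def negT (N : ℕ) [NeZero N] : Finset (Finset (ZMod N)) :=
  (Finset.univ.erase (0 : ZMod N)).image fun x => {0, x, -x}

lemma count_negT {N : ℕ} [Fact N.Prime] [NeZero N] (hN3 : 3 < N) :
    (negT N).card * 2 = N - 1 := by
  unfold negT
  have hcard : (Finset.univ.erase (0 : ZMod N)).card = N - 1 := by
    rw [Finset.card_erase_of_mem (Finset.mem_univ _), Finset.card_univ, ZMod.card]
  have hsum := Finset.card_eq_sum_card_image (fun x : ZMod N => ({0, x, -x} : Finset (ZMod N)))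
    (Finset.univ.erase (0 : ZMod N))
  rw [hcard] at hsum
  have hfiber : ∀ b ∈ (Finset.univ.erase (0 : ZMod N)).image
      (fun x => ({0, x, -x} : Finset (ZMod N))),
      ((Finset.univ.erase (0 : ZMod N)).filter (fun a => ({0, a, -a} : Finset (ZMod N)) = b)).card
        = 2 := by
    intro b hb
    obtain ⟨x, hx, rfl⟩ := Finset.mem_image.1 hb
    have hx0 : x ≠ 0 := (Finset.mem_erase.1 hx).1
    have hfil : ((Finset.univ.erase (0 : ZMod N)).filter
        (fun a => ({0, a, -a} : Finset (ZMod N)) = {0, x, -x})) = {x, -x} := by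
      ext y
      simp only [Finset.mem_filter, Finset.mem_erase, Finset.mem_univ, and_true,
        Finset.mem_insert, Finset.mem_singleton, true_and]
      constructor
      · rintro ⟨hy0, heq⟩
        have : y ∈ ({0, x, -x} : Finset (ZMod N)) := by
          rw [← heq]; simp
        simp only [Finset.mem_insert, Finset.mem_singleton] at this
        tauto
      · rintro (rfl | rfl)
        · exact ⟨hx0, rfl⟩
        · exact ⟨neg_ne_zero.2 hx0, by rw [neg_neg, Finset.pair_comm x (-x)]⟩
    rw [hfil, Finset.card_pair (fun h => myNegNeSelf hN3 hx0 h.symm)]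
  rw [Finset.sum_congr rfl hfiber, Finset.sum_const, smul_eq_mul] at hsum
  omega

/-- For a prime `N > 3` with `N ≡ 2 (mod 3)`, the number of orbits of the action of
`(ℤ/Nℤ)ˣ` on the `3`-element subsets of `ℤ/Nℤ` equals `(N² − 2N + 3)/6`. -/
theorem card_three_subset_orbits_two_mod_three (N : ℕ) (hN : N.Prime) (hN3 : 3 < N)
    (hmod : N % 3 = 2) :
    (Nat.card (Quot (subsetOrbitRel N 3)) : ℚ) =
      ((N : ℚ) ^ 2 - 2 * (N : ℚ) + 3) / 6 := by
  haveI hF : Fact N.Prime := ⟨hN⟩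
  haveI : NeZero N := ⟨hN.pos.ne'⟩
  haveI : ∀ u : (ZMod N)ˣ, Fintype (fixedBy {s : Finset (ZMod N) // s.card = 3} u) :=
    fun u => Fintype.ofFinite _
  haveI : Fintype (orbitRel.Quotient (ZMod N)ˣ {s : Finset (ZMod N) // s.card = 3}) :=
    Fintype.ofFinite _
  -- identify the quotient with the orbit quotient
  have eQuot : Quot (subsetOrbitRel N 3) ≃
      orbitRel.Quotient (ZMod N)ˣ {s : Finset (ZMod N) // s.card = 3} := by
    refine Quot.congr (Equiv.refl _) ?_
    intro a b
    show subsetOrbitRel N 3 a b ↔ a ∈ orbit (ZMod N)ˣ b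
    constructor
    · rintro ⟨u, hu⟩
      have hu' : u • a = b := Subtype.ext hu
      exact MulAction.mem_orbit_iff.2 ⟨u⁻¹, by rw [← hu', inv_smul_smul]⟩
    · intro h
      obtain ⟨g, hg⟩ := MulAction.mem_orbit_iff.1 h
      refine ⟨g⁻¹, ?_⟩
      rw [← smul_val]
      exact congrArg Subtype.val (by rw [← hg, inv_smul_smul])
  rw [Nat.card_congr eQuot, Nat.card_eq_fintype_card]
  -- Burnside
  have hBurn := MulAction.sum_card_fixedBy_eq_card_orbits_mul_card_group (ZMod N)ˣ
    {s : Finset (ZMod N) // s.card = 3}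
  have hone : (1 : (ZMod N)ˣ) ≠ -1 := by
    intro h
    have h1 : ((1 : (ZMod N)ˣ) : ZMod N) = ((-1 : (ZMod N)ˣ) : ZMod N) := congrArg Units.val h
    rw [Units.val_neg, Units.val_one] at h1
    exact myTwoNeZero hN3 (by linear_combination h1)
  -- the sum of fixed points
  have hcard1 : Fintype.card (fixedBy {s : Finset (ZMod N) // s.card = 3} (1 : (ZMod N)ˣ)) =
      N.choose 3 := by
    have h1 : Fintype.card (fixedBy {s : Finset (ZMod N) // s.card = 3} (1 : (ZMod N)ˣ)) =
        Fintype.card {s : Finset (ZMod N) // s.card = 3} :=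
      Fintype.card_congr (Equiv.subtypeUnivEquiv (fun x => one_smul _ x))
    rw [h1, Fintype.card_finset_len, ZMod.card]
  have main_iff : ∀ S : Finset (ZMod N),
      (S.card = 3 ∧ S.image (fun x => ((-1 : (ZMod N)ˣ) : ZMod N) * x) = S) ↔ S ∈ negT N := by
    intro S
    have hval : ((-1 : (ZMod N)ˣ) : ZMod N) = -1 := by simp
    rw [hval, neg_fix_iff hN3]
    unfold negT
    simp only [Finset.mem_image, Finset.mem_erase, Finset.mem_univ, and_true]
    constructor
    · rintro ⟨x, hx0, rfl⟩; exact ⟨x, hx0, rfl⟩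
    · rintro ⟨x, hx0, rfl⟩; exact ⟨x, hx0, rfl⟩
  have hcardneg : Fintype.card (fixedBy {s : Finset (ZMod N) // s.card = 3} (-1 : (ZMod N)ˣ)) =
      (negT N).card := by
    rw [← Nat.card_eq_fintype_card, ← Nat.card_eq_finsetCard]
    apply Nat.card_congr
    exact
      { toFun := fun p => ⟨p.1.1, (main_iff _).1 ⟨p.1.2, congrArg Subtype.val p.2⟩⟩
        invFun := fun q => ⟨⟨q.1, ((main_iff _).2 q.2).1⟩, Subtype.ext ((main_iff _).2 q.2).2⟩
        left_inv := fun p => Subtype.ext (Subtype.ext rfl)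
        right_inv := fun q => rfl }
  have hsum : ∑ u : (ZMod N)ˣ, Fintype.card (fixedBy {s : Finset (ZMod N) // s.card = 3} u) =
      N.choose 3 + (negT N).card := by
    rw [← Finset.sum_subset (Finset.subset_univ ({1, -1} : Finset (ZMod N)ˣ))
      (fun x _ hx => ?_)]
    · rw [Finset.sum_pair hone, hcard1, hcardneg]
    · simp only [Finset.mem_insert, Finset.mem_singleton, not_or] at hx
      rw [Fintype.card_eq_zero_iff]
      exact ⟨fun p => (no_fix hN3 hmod x hx.1 hx.2 p.1.1 p.1.2
        (congrArg Subtype.val p.2)).elim⟩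
  have hcardU : Fintype.card (ZMod N)ˣ = N - 1 := by
    rw [ZMod.card_units_eq_totient, Nat.totient_prime hN]
  rw [hsum, hcardU] at hBurn
  -- final arithmetic
  have ht := count_negT (N := N) hN3
  obtain ⟨n, rfl⟩ : ∃ n, N = n + 4 := ⟨N - 4, by omega⟩
  have hc6 := mychoose3 (n + 1)
  simp only [show n + 1 + 3 = n + 4 from by omega, show n + 1 + 2 = n + 3 from by omega,
    show n + 1 + 1 = n + 2 from by omega] at hc6
  have hsub : n + 4 - 1 = n + 3 := by omega
  rw [hsub] at hBurn
  have hkb : (n + 4).choose 3 + (negT (n + 4)).card =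
      Fintype.card (orbitRel.Quotient (ZMod (n + 4))ˣ
        {s : Finset (ZMod (n + 4)) // s.card = 3}) * (n + 3) := hBurn
  have h1 : ((n + 4).choose 3 : ℚ) * 6 = ((n : ℚ) + 4) * ((n : ℚ) + 3) * ((n : ℚ) + 2) := by
    exact_mod_cast hc6
  have h2 : (((negT (n + 4)).card : ℚ)) * 2 = (n : ℚ) + 3 := by
    have hq : (negT (n + 4)).card * 2 = n + 3 := by omega
    exact_mod_cast hq
  have h3 : ((n + 4).choose 3 : ℚ) + ((negT (n + 4)).card : ℚ) =
      (Fintype.card (orbitRel.Quotient (ZMod (n + 4))ˣ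
        {s : Finset (ZMod (n + 4)) // s.card = 3}) : ℚ) * ((n : ℚ) + 3) := by
    exact_mod_cast hkb
  have hne : ((n : ℚ) + 3) ≠ 0 := by positivity
  have h6 : (Fintype.card (orbitRel.Quotient (ZMod (n + 4))ˣ
      {s : Finset (ZMod (n + 4)) // s.card = 3}) : ℚ) * 6 =
      (n : ℚ) ^ 2 + 6 * (n : ℚ) + 11 :=
    mul_left_cancel₀ hne (by linear_combination h1 + 3 * h2 - 6 * h3)
  push_cast
  linear_combination h6 / 6
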